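/- arXiv:1109.6749 — 3 statements merged into one kernel-verified Lean document; each statement's English description precedes it below -/
import Mathlib

section
/- Let P be a closed subset of Cantor space, let l be a natural number, and let τ be a finite binary string that is l-extendible in P (i.e., λ(P | τ) ≥ 2^{-l}, where P | τ = {X : τ⌢X ∈ P}). Then there are at least two strings σ extending τ of length |τ| + l + 1 that are (l+1)-extendible in P. -/
open MeasureTheory

/-- The basic clopen set `[σ]` of infinite binary sequences extending the string `σ`. -/
def cylinder (σ : List Bool) : Set (ℕ → Bool) :=
  {X | ∀ i : Fin σ.length, X i = σ.get i}

/-- The open set `⟦W⟧ = ⋃_{σ ∈ W} [σ]` determined by a set of strings. -/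
def stringsOpen (W : Set (List Bool)) : Set (ℕ → Bool) :=
  ⋃ σ ∈ W, cylinder σ

/-- `μ` is the fair-coin (uniform) product measure on Cantor space `2^ω`:
a probability measure giving each basic cylinder `[σ]` measure `2^{-|σ|}`. -/
def IsFairCoin (μ : Measure (ℕ → Bool)) : Prop :=
  IsProbabilityMeasure μ ∧ ∀ σ : List Bool, μ (cylinder σ) = (2 : ENNReal)⁻¹ ^ σ.length

/-- `τ⌢X`: the concatenation of a finite string with an infinite sequence. -/
def ocat (τ : List Bool) (X : ℕ → Bool) : ℕ → Bool :=
  fun i => if h : i < τ.length then τ.get ⟨i, h⟩ else X (i - τ.length)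

/-- `B ∣ τ = {X : τ⌢X ∈ B}`, the localization of a class to the string `τ`. -/
def localize (B : Set (ℕ → Bool)) (τ : List Bool) : Set (ℕ → Bool) :=
  {X | ocat τ X ∈ B}

/-- The first `k` bits of `A` as a finite string. -/
def initSeg (A : ℕ → Bool) (k : ℕ) : List Bool :=
  List.ofFn fun i : Fin k => A i

/-- `τ` is `l`-extendible in `P` if `λ(P ∣ τ) ≥ 2^{-l}`. -/
def Extendible (μ : Measure (ℕ → Bool)) (l : ℕ) (P : Set (ℕ → Bool)) (τ : List Bool) : Prop :=
  (2 : ENNReal)⁻¹ ^ l ≤ μ (localize P τ)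


abbrev cyl (σ : List Bool) : Set (ℕ → Bool) := cylinder σ

lemma mem_cyl {σ : List Bool} {X : ℕ → Bool} :
    X ∈ cyl σ ↔ ∀ i, (h : i < σ.length) → X i = σ[i] := by
  constructor
  · intro hX i h; exact hX ⟨i, h⟩
  · intro h i; exact h i i.2

lemma measurable_ocat (τ : List Bool) : Measurable (ocat τ) := by
  apply measurable_pi_lambda
  intro i
  unfold ocat
  by_cases h : i < τ.length
  · simp only [h, dif_pos]; exact measurable_const
  · simp only [h, dif_neg, not_false_iff]; exact measurable_pi_apply _

lemma measurableSet_cyl (σ : List Bool) : MeasurableSet (cyl σ) := by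
  have : cyl σ = ⋂ i : Fin σ.length, {X : ℕ → Bool | X i = σ.get i} := by
    ext X; simp only [Set.mem_iInter]; exact Iff.rfl
  rw [this]
  exact MeasurableSet.iInter fun i => (measurable_pi_apply (i : ℕ)) (MeasurableSet.singleton _)

lemma isPiSystem_cyl : IsPiSystem (Set.range cyl) := by
  rintro _ ⟨σ, rfl⟩ _ ⟨ρ, rfl⟩ ⟨X, hXσ, hXρ⟩
  rw [mem_cyl] at hXσ hXρ
  rcases le_or_gt σ.length ρ.length with h | h
  · refine ⟨ρ, ?_⟩
    symm
    apply Set.eq_of_subset_of_subset (Set.inter_subset_right)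
    intro Y h2
    rw [mem_cyl] at h2
    refine ⟨mem_cyl.mpr fun i hi => ?_, mem_cyl.mpr h2⟩
    rw [h2 i (lt_of_lt_of_le hi h), ← hXρ i (lt_of_lt_of_le hi h), hXσ i hi]
  · refine ⟨σ, ?_⟩
    symm
    apply Set.eq_of_subset_of_subset (Set.inter_subset_left)
    intro Y h1
    rw [mem_cyl] at h1
    refine ⟨mem_cyl.mpr h1, mem_cyl.mpr fun i hi => ?_⟩
    rw [h1 i (lt_of_lt_of_le hi h.le), ← hXσ i (lt_of_lt_of_le hi h.le), hXρ i hi]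

lemma eval_set_measurable (i : ℕ) (b : Bool) :
    MeasurableSet[MeasurableSpace.generateFrom (Set.range cyl)] {X : ℕ → Bool | X i = b} := by
  have heq : {X : ℕ → Bool | X i = b} =
      ⋃ v : Fin (i + 1) → Bool, ⋃ (_ : v ⟨i, Nat.lt_succ_self i⟩ = b), cyl (List.ofFn v) := by
    ext X
    simp only [Set.mem_iUnion, Set.mem_setOf_eq]
    constructor
    · intro hx
      refine ⟨fun j => X j, hx, mem_cyl.mpr fun j hj => ?_⟩
      simp only [List.getElem_ofFn]
    · rintro ⟨v, hv, hX⟩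
      rw [mem_cyl] at hX
      have := hX i (by simp)
      rw [this, ← hv, List.getElem_ofFn]
  rw [heq]
  exact MeasurableSet.iUnion fun v => MeasurableSet.iUnion fun _ =>
    MeasurableSpace.measurableSet_generateFrom ⟨List.ofFn v, rfl⟩

lemma generateFrom_cyl :
    MeasurableSpace.generateFrom (Set.range cyl) = (inferInstance : MeasurableSpace (ℕ → Bool)) := by
  apply le_antisymm
  · rw [MeasurableSpace.generateFrom_le_iff]
    rintro _ ⟨σ, rfl⟩
    exact measurableSet_cyl σ
  · rw [show (inferInstance : MeasurableSpace (ℕ → Bool)) = MeasurableSpace.pi from rfl,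
      MeasurableSpace.pi]
    apply iSup_le
    intro i
    rw [← measurable_iff_comap_le]
    intro s _
    have : (fun X : ℕ → Bool => X i) ⁻¹' s = ⋃ b ∈ s, {X : ℕ → Bool | X i = b} := by
      ext X; simp
    rw [this]
    exact MeasurableSet.biUnion s.to_countable fun b _ => eval_set_measurable i b

lemma cyl_measure_ext {ν₁ ν₂ : Measure (ℕ → Bool)} [IsFiniteMeasure ν₁]
    (h : ∀ σ, ν₁ (cyl σ) = ν₂ (cyl σ)) (hu : ν₁ Set.univ = ν₂ Set.univ) : ν₁ = ν₂ := by
  refine ext_of_generate_finite _ generateFrom_cyl.symm isPiSystem_cyl ?_ hu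
  rintro _ ⟨σ, rfl⟩
  exact h σ

section preimage
variable {ρ σ : List Bool}

def Compat (σ ρ : List Bool) : Prop :=
  ∀ i (h1 : i < σ.length) (h2 : i < ρ.length), σ[i] = ρ[i]

lemma ocat_preimage_cyl_of_compat (h : Compat σ ρ) :
    ocat ρ ⁻¹' cyl σ = cyl (σ.drop ρ.length) := by
  ext X
  simp only [Set.mem_preimage, mem_cyl, List.length_drop]
  constructor
  · intro hpre j hj
    have h1 : ρ.length + j < σ.length := by omega
    have := hpre (ρ.length + j) h1
    rw [ocat] at this
    simp only [Nat.not_lt.mpr (Nat.le_add_right _ _), dif_neg, not_lt,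
      Nat.add_sub_cancel_left] at this
    rw [List.getElem_drop]
    first
    | exact this
    | · convert this using 2
        omega
  · intro hd i hi
    rw [ocat]
    by_cases hlt : i < ρ.length
    · simp only [hlt, dif_pos]
      exact (h i hi hlt).symm
    · simp only [hlt, dif_neg, not_false_iff]
      have hj : i - ρ.length < σ.length - ρ.length := by omega
      have := hd (i - ρ.length) hj
      rw [List.getElem_drop] at this
      first
      | exact this
      | · convert this using 2
          omega

lemma ocat_preimage_cyl_of_not_compat (h : ¬ Compat σ ρ) :
    ocat ρ ⁻¹' cyl σ = ∅ := by
  rw [Compat] at h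
  push_neg at h
  obtain ⟨i, h1, h2, hne⟩ := h
  ext X
  simp only [Set.mem_preimage, mem_cyl, Set.mem_empty_iff_false, iff_false]
  intro hpre
  have := hpre i h1
  rw [ocat] at this
  simp only [h2, dif_pos] at this
  exact hne (this ▸ rfl)

lemma cyl_inter_of_not_compat (h : ¬ Compat σ ρ) :
    cyl σ ∩ cyl ρ = ∅ := by
  rw [Compat] at h
  push_neg at h
  obtain ⟨i, h1, h2, hne⟩ := h
  ext X
  simp only [Set.mem_inter_iff, Set.mem_empty_iff_false, iff_false]
  rintro ⟨hs, hr⟩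
  rw [mem_cyl] at hs hr
  exact hne ((hs i h1).symm.trans (hr i h2))

lemma cyl_inter_of_compat_le (h : Compat σ ρ) (hl : σ.length ≤ ρ.length) :
    cyl σ ∩ cyl ρ = cyl ρ := by
  apply Set.eq_of_subset_of_subset (Set.inter_subset_right)
  intro X hX
  rw [mem_cyl] at hX
  refine ⟨mem_cyl.mpr fun i hi => ?_, mem_cyl.mpr hX⟩
  rw [hX i (lt_of_lt_of_le hi hl)]
  exact (h i hi (lt_of_lt_of_le hi hl)).symm

lemma cyl_inter_of_compat_ge (h : Compat σ ρ) (hl : ρ.length ≤ σ.length) :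
    cyl σ ∩ cyl ρ = cyl σ := by
  apply Set.eq_of_subset_of_subset (Set.inter_subset_left)
  intro X hX
  rw [mem_cyl] at hX
  refine ⟨mem_cyl.mpr hX, mem_cyl.mpr fun i hi => ?_⟩
  rw [hX i (lt_of_lt_of_le hi hl)]
  exact h i (lt_of_lt_of_le hi hl) hi

end preimage

def IsFairCoin' (μ : Measure (ℕ → Bool)) : Prop :=
  IsProbabilityMeasure μ ∧ ∀ σ : List Bool, μ (cyl σ) = (2 : ENNReal)⁻¹ ^ σ.length

lemma measure_inter_cyl (μ : Measure (ℕ → Bool)) (hμ : IsFairCoin' μ)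
    (B : Set (ℕ → Bool)) (hB : MeasurableSet B) (ρ : List Bool) :
    μ (B ∩ cyl ρ) = (2 : ENNReal)⁻¹ ^ ρ.length * μ (ocat ρ ⁻¹' B) := by
  obtain ⟨hprob, hcy⟩ := hμ
  haveI := hprob
  set ν₁ := μ.restrict (cyl ρ) with hν₁
  set ν₂ := ((2 : ENNReal)⁻¹ ^ ρ.length) • μ.map (ocat ρ) with hν₂
  have hmap : ∀ s : Set (ℕ → Bool), MeasurableSet s →
      ν₂ s = (2 : ENNReal)⁻¹ ^ ρ.length * μ (ocat ρ ⁻¹' s) := by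
    intro s hs
    rw [hν₂, Measure.smul_apply, Measure.map_apply (measurable_ocat ρ) hs, smul_eq_mul]
  have heq : ν₁ = ν₂ := by
    apply cyl_measure_ext
    · intro σ
      rw [hν₁, Measure.restrict_apply (measurableSet_cyl σ),
        hmap _ (measurableSet_cyl σ)]
      by_cases hcomp : Compat σ ρ
      · rw [ocat_preimage_cyl_of_compat hcomp, hcy, List.length_drop]
        rcases le_or_gt σ.length ρ.length with hl | hl
        · rw [cyl_inter_of_compat_le hcomp hl, hcy, Nat.sub_eq_zero_of_le hl, pow_zero,
            mul_one]
        · rw [cyl_inter_of_compat_ge hcomp hl.le, hcy, ← pow_add,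
            Nat.add_sub_cancel' hl.le]
      · rw [ocat_preimage_cyl_of_not_compat hcomp, cyl_inter_of_not_compat hcomp,
          measure_empty, mul_zero]
    · rw [hν₁, Measure.restrict_apply MeasurableSet.univ, Set.univ_inter,
        hmap _ MeasurableSet.univ, Set.preimage_univ, measure_univ, mul_one, hcy]
  rw [← Measure.restrict_apply hB, ← hν₁, heq, hmap _ hB]

lemma iUnion_cyl_ofFn (k : ℕ) : (⋃ v : Fin k → Bool, cyl (List.ofFn v)) = Set.univ := by
  ext X
  simp only [Set.mem_iUnion, Set.mem_univ, iff_true]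
  refine ⟨fun j => X j, mem_cyl.mpr fun i hi => ?_⟩
  rw [List.getElem_ofFn]

lemma disjoint_cyl_ofFn {k : ℕ} {v w : Fin k → Bool} (hvw : v ≠ w) :
    Disjoint (cyl (List.ofFn v)) (cyl (List.ofFn w)) := by
  obtain ⟨i, hi⟩ := Function.ne_iff.mp hvw
  rw [Set.disjoint_left]
  intro X hXv hXw
  rw [mem_cyl] at hXv hXw
  have h1 := hXv i (by simp [i.2])
  have h2 := hXw i (by simp [i.2])
  rw [List.getElem_ofFn] at h1 h2
  apply hi
  simp only [Fin.eta] at h1 h2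
  rw [← h1, ← h2]

lemma measure_partition (μ : Measure (ℕ → Bool)) (B : Set (ℕ → Bool))
    (hB : MeasurableSet B) (k : ℕ) :
    μ B = ∑ v : Fin k → Bool, μ (B ∩ cyl (List.ofFn v)) := by
  have hcover : B = ⋃ v : Fin k → Bool, B ∩ cyl (List.ofFn v) := by
    rw [← Set.inter_iUnion, iUnion_cyl_ofFn, Set.inter_univ]
  conv_lhs => rw [hcover]
  rw [measure_iUnion ?_ fun v => hB.inter (measurableSet_cyl _), tsum_fintype]
  intro v w hvw
  exact Disjoint.mono Set.inter_subset_right Set.inter_subset_right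
    (disjoint_cyl_ofFn hvw)

lemma ocat_append (τ ρ : List Bool) (X : ℕ → Bool) :
    ocat (τ ++ ρ) X = ocat τ (ocat ρ X) := by
  funext i
  simp only [ocat, List.length_append]
  by_cases h1 : i < τ.length
  · rw [dif_pos (by omega), dif_pos h1]
    exact List.getElem_append_left h1 (h' := by rw [List.length_append]; omega)
  · by_cases h2 : i < τ.length + ρ.length
    · rw [dif_pos h2, dif_neg h1, dif_pos (by omega)]
      exact List.getElem_append_right (as := τ) (bs := ρ) (by omega)
        (h₂ := by rw [List.length_append]; omega)
    · rw [dif_neg (by omega), dif_neg h1, dif_neg (by omega)]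
      congr 1
      omega

/-- Kučera's extension lemma: if `τ` is `l`-extendible in the closed set `P`,
then at least two extensions of `τ` of length `|τ| + l + 1` are
`(l+1)`-extendible in `P`. -/
theorem stmt1 (μ : Measure (ℕ → Bool)) (hμ : IsFairCoin μ)
    (P : Set (ℕ → Bool)) (hP : IsClosed P) (l : ℕ) (τ : List Bool)
    (hτ : Extendible μ l P τ) :
    ∃ σ₁ σ₂ : List Bool, σ₁ ≠ σ₂ ∧
      (τ <+: σ₁ ∧ σ₁.length = τ.length + l + 1 ∧ Extendible μ (l + 1) P σ₁) ∧
      (τ <+: σ₂ ∧ σ₂.length = τ.length + l + 1 ∧ Extendible μ (l + 1) P σ₂) := by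
  classical
  obtain ⟨hprob, hcy⟩ := hμ
  haveI := hprob
  have hPm : MeasurableSet P := hP.measurableSet
  have hBm : ∀ ρ : List Bool, MeasurableSet (localize P ρ) :=
    fun ρ => (measurable_ocat ρ) hPm
  set c : ENNReal := (2 : ENNReal)⁻¹ ^ (l + 1) with hc
  have hcne0 : c ≠ 0 := by
    rw [hc]
    exact pow_ne_zero _ (ENNReal.inv_ne_zero.mpr ENNReal.ofNat_ne_top)
  have hcnetop : c ≠ ⊤ := by
    rw [hc]
    exact ENNReal.pow_ne_top (by simp)
  set f : (Fin (l + 1) → Bool) → ENNReal :=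
    fun v => μ (localize P (τ ++ List.ofFn v)) with hf
  have hset : ∀ v : Fin (l + 1) → Bool,
      ocat (List.ofFn v) ⁻¹' localize P τ = localize P (τ ++ List.ofFn v) := by
    intro v
    ext X
    simp only [Set.mem_preimage, localize, Set.mem_setOf_eq, ocat_append]
  have hval : ∀ v : Fin (l + 1) → Bool,
      μ (localize P τ ∩ cyl (List.ofFn v)) = c * f v := by
    intro v
    rw [measure_inter_cyl μ ⟨hprob, hcy⟩ _ (hBm τ) _, hset v, List.length_ofFn]
  have hpow1 : (2 : ENNReal) ^ (l + 1) * c = 1 := by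
    rw [hc, ← ENNReal.inv_pow, ENNReal.mul_inv_cancel (pow_ne_zero _ two_ne_zero)
      (ENNReal.pow_ne_top ENNReal.ofNat_ne_top)]
  have hNc : ((2 ^ (l + 1) : ℕ) : ENNReal) * c = 1 := by
    push_cast
    exact hpow1
  have hsum : μ (localize P τ) = c * ∑ v : Fin (l + 1) → Bool, f v := by
    rw [measure_partition μ _ (hBm τ) (l + 1), Finset.mul_sum]
    exact Finset.sum_congr rfl fun v _ => hval v
  have h2le : (2 : ENNReal) ≤ ∑ v : Fin (l + 1) → Bool, f v := by
    have h1 := hτ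
    rw [Extendible, hsum] at h1
    have h2 := mul_le_mul_right h1 ((2 : ENNReal) ^ (l + 1))
    rw [← mul_assoc, hpow1, one_mul] at h2
    calc (2 : ENNReal) = (2 : ENNReal) ^ (l + 1) * (2 : ENNReal)⁻¹ ^ l := by
          rw [pow_succ, ← ENNReal.inv_pow, mul_right_comm,
            ENNReal.mul_inv_cancel (pow_ne_zero _ two_ne_zero)
              (ENNReal.pow_ne_top ENNReal.ofNat_ne_top), one_mul]
      _ ≤ _ := h2
  set S : Finset (Fin (l + 1) → Bool) :=
    Finset.univ.filter (fun v => Extendible μ (l + 1) P (τ ++ List.ofFn v)) with hS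
  by_cases hcard : 2 ≤ S.card
  · obtain ⟨a, ha, b, hb, hab⟩ := Finset.one_lt_card.mp hcard
    rw [hS, Finset.mem_filter] at ha hb
    refine ⟨τ ++ List.ofFn a, τ ++ List.ofFn b, ?_, ⟨⟨List.ofFn a, rfl⟩, ?_, ha.2⟩,
      ⟨⟨List.ofFn b, rfl⟩, ?_, hb.2⟩⟩
    · intro h
      exact hab (List.ofFn_injective (List.append_cancel_left h))
    · rw [List.length_append, List.length_ofFn]; omega
    · rw [List.length_append, List.length_ofFn]; omega
  · exfalso
    push_neg at hcard
    have hNcard : Fintype.card (Fin (l + 1) → Bool) = 2 ^ (l + 1) := by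
      rw [Fintype.card_fun, Fintype.card_bool, Fintype.card_fin]
    have hsplit : ∑ v : Fin (l + 1) → Bool, f v =
        ∑ v ∈ S, f v + ∑ v ∈ Sᶜ, f v := (Finset.sum_add_sum_compl S f).symm
    have hS1 : ∑ v ∈ S, f v ≤ S.card • (1 : ENNReal) :=
      Finset.sum_le_card_nsmul _ _ _ fun v _ => prob_le_one
    have hS2 : ∑ v ∈ Sᶜ, f v ≤ Sᶜ.card • c := by
      refine Finset.sum_le_card_nsmul _ _ _ fun v hv => ?_
      rw [Finset.mem_compl, hS, Finset.mem_filter] at hv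
      have : ¬ Extendible μ (l + 1) P (τ ++ List.ofFn v) := fun h => hv ⟨Finset.mem_univ _, h⟩
      rw [Extendible, not_le] at this
      exact this.le
    have hScc : Sᶜ.card = 2 ^ (l + 1) - S.card := by
      rw [Finset.card_compl, hNcard]
    have hc01 : S.card = 0 ∨ S.card = 1 := by omega
    rcases hc01 with h0 | h1
    · rw [h0] at hS1 hScc
      have hle1 : (∑ v : Fin (l + 1) → Bool, f v) ≤ 1 := by
        rw [hsplit]
        calc ∑ v ∈ S, f v + ∑ v ∈ Sᶜ, f v
            ≤ 0 • (1 : ENNReal) + Sᶜ.card • c := add_le_add hS1 hS2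
          _ = ((2 ^ (l + 1) : ℕ) : ENNReal) * c := by
              rw [zero_smul, zero_add, hScc, Nat.sub_zero, nsmul_eq_mul]
          _ = 1 := hNc
      exact absurd (h2le.trans hle1) (by norm_num)
    · rw [h1] at hS1 hScc
      have hone : ((2 ^ (l + 1) - 1 : ℕ) : ENNReal) * c < 1 := by
        rw [← hNc]
        rw [ENNReal.mul_lt_mul_iff_left hcne0 hcnetop]
        exact_mod_cast Nat.sub_lt (Nat.pow_pos (by norm_num)) one_pos
      have hb : (∑ v : Fin (l + 1) → Bool, f v) < 2 := by
        rw [hsplit]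
        calc ∑ v ∈ S, f v + ∑ v ∈ Sᶜ, f v
            ≤ 1 + ((2 ^ (l + 1) - 1 : ℕ) : ENNReal) * c := by
              refine add_le_add (hS1.trans (le_of_eq (one_smul ℕ (1 : ENNReal)))) (hS2.trans ?_)
              rw [hScc, nsmul_eq_mul]
          _ < 1 + 1 := ENNReal.add_lt_add_left ENNReal.one_ne_top hone
          _ = 2 := one_add_one_eq_two
      exact absurd h2le (not_le.mpr hb)
end

section
/- Let (G_n)_{n∈ℕ} be a sequence of open subsets of 2^ω with λ(G_n) ≤ 2^{-2n-1} for all n, and set L_n = ⋃_{m ≤ n} G_m. Then there exists Z ∈ 2^ω such that for all n, λ(L_n | Z↾n) ≤ 1 − 2^{-n-1}; moreover any such Z avoids every G_n (i.e., Z ∉ G_n for all n). -/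
open MeasureTheory

namespace S3

lemma ocat_lt (τ : List Bool) (X : ℕ → Bool) {i : ℕ} (h : i < τ.length) :
    ocat τ X i = τ.get ⟨i, h⟩ := dif_pos h

lemma ocat_ge (τ : List Bool) (X : ℕ → Bool) {i : ℕ} (h : ¬ i < τ.length) :
    ocat τ X i = X (i - τ.length) := dif_neg h

lemma measurable_ocat (σ : List Bool) : Measurable (ocat σ) := by
  refine measurable_pi_iff.mpr fun i => ?_
  by_cases h : i < σ.length
  · simpa [ocat, h] using measurable_const
  · simpa [ocat, h] using measurable_pi_apply (i - σ.length)

lemma measurableSet_cylinder (σ : List Bool) : MeasurableSet (_root_.cylinder σ) := by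
  have : _root_.cylinder σ = ⋂ i : Fin σ.length, (fun X : ℕ → Bool => X i) ⁻¹' {σ.get i} := by
    ext X; simp [_root_.cylinder]
  rw [this]
  exact MeasurableSet.iInter fun i => (measurable_pi_apply _) (measurableSet_singleton _)

lemma mem_cylinder_initSeg (Z : ℕ → Bool) (k : ℕ) : Z ∈ _root_.cylinder (initSeg Z k) := by
  intro i
  exact (List.get_ofFn (fun j : Fin k => Z j) i).symm

lemma initSeg_get (Z : ℕ → Bool) (k : ℕ) (i : Fin (initSeg Z k).length) :
    (initSeg Z k).get i = Z i := by
  exact List.get_ofFn (fun j : Fin k => Z j) i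

lemma generateFrom_cylinders :
    MeasurableSpace.generateFrom (Set.range _root_.cylinder) = (inferInstance : MeasurableSpace (ℕ → Bool)) := by
  apply le_antisymm
  · rw [MeasurableSpace.generateFrom_le_iff]
    rintro s ⟨σ, rfl⟩; exact measurableSet_cylinder σ
  · refine iSup_le fun i => ?_
    rw [← measurable_iff_comap_le]
    have key : ∀ b : Bool,
        MeasurableSet[MeasurableSpace.generateFrom (Set.range _root_.cylinder)] {X : ℕ → Bool | X i = b} := by
      intro b
      have : {X : ℕ → Bool | X i = b} =
          ⋃ (σ : List Bool) (h : σ.length = i + 1) (_ : σ.get ⟨i, by omega⟩ = b), _root_.cylinder σ := by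
        ext X
        simp only [Set.mem_iUnion, Set.mem_setOf_eq]
        constructor
        · intro h
          refine ⟨initSeg X (i + 1), by simp [initSeg], ?_, mem_cylinder_initSeg X (i + 1)⟩
          rw [initSeg_get]; exact h
        · rintro ⟨σ, h1, h2, hX⟩
          have := hX ⟨i, by omega⟩
          rw [this]; exact h2
      rw [this]
      exact MeasurableSet.iUnion fun σ => MeasurableSet.iUnion fun h =>
        MeasurableSet.iUnion fun h2 => MeasurableSpace.measurableSet_generateFrom ⟨σ, rfl⟩
    intro s _
    have : (fun X : ℕ → Bool => X i) ⁻¹' s = ⋃ b ∈ s, {X : ℕ → Bool | X i = b} := by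
      ext X; simp
    rw [this]
    exact MeasurableSet.biUnion s.to_countable fun b _ => key b

lemma isPiSystem_cylinders : IsPiSystem (Set.range _root_.cylinder) := by
  rintro _ ⟨σ, rfl⟩ _ ⟨τ, rfl⟩ ⟨X, hXσ, hXτ⟩
  have sub : ∀ {σ τ : List Bool}, σ.length ≤ τ.length → X ∈ _root_.cylinder σ → X ∈ _root_.cylinder τ →
      _root_.cylinder τ ⊆ _root_.cylinder σ := by
    intro σ τ h hσ hτ Y hY i
    have hi : (i : ℕ) < τ.length := lt_of_lt_of_le i.2 h
    calc Y i = τ.get ⟨i, hi⟩ := hY ⟨i, hi⟩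
    _ = X i := (hτ ⟨i, hi⟩).symm
    _ = σ.get i := hσ i
  rcases le_total σ.length τ.length with h | h
  · exact ⟨τ, by rw [Set.inter_eq_right.mpr (sub h hXσ hXτ)]⟩
  · exact ⟨σ, by rw [Set.inter_eq_left.mpr (sub h hXτ hXσ)]⟩

end S3

namespace S3

def Compat (σ τ : List Bool) : Prop :=
  ∀ i (h1 : i < σ.length) (h2 : i < τ.length), σ.get ⟨i, h1⟩ = τ.get ⟨i, h2⟩

lemma localize_cylinder_of_compat {σ τ : List Bool} (h : Compat σ τ) :
    localize (_root_.cylinder τ) σ = _root_.cylinder (τ.drop σ.length) := by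
  ext X
  constructor
  · intro hX j
    have hj : σ.length + (j : ℕ) < τ.length := by
      have := j.2; simp [List.length_drop] at this; omega
    have h1 := hX ⟨σ.length + j, hj⟩
    have h2 : ocat σ X (σ.length + j) = X j := by
      rw [ocat_ge _ _ (by omega)]; congr 1; omega
    rw [h2] at h1
    rw [h1]
    simp [List.get_eq_getElem, List.getElem_drop]
  · intro hX i
    by_cases hi : (i : ℕ) < σ.length
    · have := h i hi i.2
      simpa [ocat_lt σ X hi] using this
    · have hj : (i : ℕ) - σ.length < (τ.drop σ.length).length := by
        have := i.2; simp [List.length_drop]; omega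
      have h1 := hX ⟨(i : ℕ) - σ.length, hj⟩
      rw [ocat_ge _ _ hi, h1]
      simp only [List.get_eq_getElem, List.getElem_drop]
      congr 1
      omega

lemma localize_cylinder_of_not_compat {σ τ : List Bool} (h : ¬ Compat σ τ) :
    localize (_root_.cylinder τ) σ = ∅ := by
  ext X
  simp only [Set.mem_empty_iff_false, iff_false]
  intro hX
  apply h
  intro i h1 h2
  have := hX ⟨i, h2⟩
  rw [show ((⟨i, h2⟩ : Fin τ.length) : ℕ) = i from rfl] at this
  rw [← this, ocat_lt σ X h1]

lemma inter_cylinder_of_compat {σ τ : List Bool} (h : Compat σ τ) :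
    _root_.cylinder τ ∩ _root_.cylinder σ = _root_.cylinder (σ ++ τ.drop σ.length) := by
  ext X
  constructor
  · rintro ⟨hτ, hσ⟩ i
    have hi : (i : ℕ) < σ.length + (τ.length - σ.length) := by
      have := i.2; simpa [List.length_append, List.length_drop] using this
    by_cases hc : (i : ℕ) < σ.length
    · have := hσ ⟨i, hc⟩
      simp only [List.get_eq_getElem] at this ⊢
      rw [List.getElem_append_left hc]
      exact this
    · have hlt : (i : ℕ) < τ.length := by omega
      have := hτ ⟨i, hlt⟩
      simp only [List.get_eq_getElem] at this ⊢
      rw [List.getElem_append_right (by omega)]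
      rw [List.getElem_drop]
      convert this using 2
      omega
  · intro hX
    have hlen : (σ ++ τ.drop σ.length).length = σ.length + (τ.length - σ.length) := by
      simp [List.length_append, List.length_drop]
    constructor
    · intro i
      by_cases hc : (i : ℕ) < σ.length
      · have h1 := hX ⟨i, by omega⟩
        simp only [List.get_eq_getElem] at h1 ⊢
        rw [h1, List.getElem_append_left hc]
        exact h i hc i.2
      · have h1 := hX ⟨i, by have := i.2; omega⟩
        simp only [List.get_eq_getElem] at h1 ⊢
        rw [h1, List.getElem_append_right (by omega), List.getElem_drop]
        congr 1
        omega
    · intro i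
      have h1 := hX ⟨i, by have := i.2; omega⟩
      simp only [List.get_eq_getElem] at h1 ⊢
      rw [h1, List.getElem_append_left i.2]

lemma inter_cylinder_of_not_compat {σ τ : List Bool} (h : ¬ Compat σ τ) :
    _root_.cylinder τ ∩ _root_.cylinder σ = ∅ := by
  ext X
  simp only [Set.mem_inter_iff, Set.mem_empty_iff_false, iff_false, not_and]
  intro hτ hσ
  apply h
  intro i h1 h2
  rw [← hσ ⟨i, h1⟩, ← hτ ⟨i, h2⟩]

end S3

namespace S3

lemma two_mul_inv_pow (n : ℕ) : (2 : ENNReal) ^ n * (2 : ENNReal)⁻¹ ^ n = 1 := by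
  rw [← mul_pow, ENNReal.mul_inv_cancel (by norm_num) (by norm_num), one_pow]

lemma cond_measure {μ : Measure (ℕ → Bool)} (hμ : IsFairCoin μ) {B : Set (ℕ → Bool)}
    (hB : MeasurableSet B) (σ : List Bool) :
    μ (localize B σ) = 2 ^ σ.length * μ (B ∩ _root_.cylinder σ) := by
  haveI := hμ.1
  have hmap : Measure.map (ocat σ) μ = (2 : ENNReal) ^ σ.length • μ.restrict (_root_.cylinder σ) := by
    have hcylval : ∀ τ : List Bool,
        (Measure.map (ocat σ) μ) (_root_.cylinder τ)
          = ((2 : ENNReal) ^ σ.length • μ.restrict (_root_.cylinder σ)) (_root_.cylinder τ) := by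
      intro τ
      rw [Measure.map_apply (measurable_ocat σ) (measurableSet_cylinder τ)]
      rw [Measure.smul_apply, Measure.restrict_apply (measurableSet_cylinder τ)]
      have : ocat σ ⁻¹' _root_.cylinder τ = localize (_root_.cylinder τ) σ := rfl
      rw [this]
      by_cases h : Compat σ τ
      · rw [localize_cylinder_of_compat h, inter_cylinder_of_compat h, hμ.2, hμ.2]
        rw [List.length_drop, List.length_append, List.length_drop]
        rw [pow_add, smul_eq_mul, ← mul_assoc, two_mul_inv_pow, one_mul]
      · rw [localize_cylinder_of_not_compat h, inter_cylinder_of_not_compat h]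
        simp
    haveI : IsProbabilityMeasure (Measure.map (ocat σ) μ) :=
      Measure.isProbabilityMeasure_map (measurable_ocat σ).aemeasurable
    refine ext_of_generate_finite (Set.range _root_.cylinder)
      generateFrom_cylinders.symm isPiSystem_cylinders ?_ ?_
    · rintro s ⟨τ, rfl⟩; exact hcylval τ
    · have huniv : (Set.univ : Set (ℕ → Bool)) = _root_.cylinder [] := by
        ext X; simp [_root_.cylinder]
      rw [huniv]; exact hcylval []
  have h1 : (Measure.map (ocat σ) μ) B = μ (localize B σ) :=
    Measure.map_apply (measurable_ocat σ) hB
  rw [← h1, hmap, Measure.smul_apply, Measure.restrict_apply hB, smul_eq_mul]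

lemma localize_le {μ : Measure (ℕ → Bool)} (hμ : IsFairCoin μ) {B : Set (ℕ → Bool)}
    (hB : MeasurableSet B) (σ : List Bool) :
    μ (localize B σ) ≤ 2 ^ σ.length * μ B := by
  rw [cond_measure hμ hB σ]
  exact mul_le_mul_right (measure_mono Set.inter_subset_left) _

lemma mem_cyl_single {X : ℕ → Bool} {b : Bool} : X ∈ _root_.cylinder [b] ↔ X 0 = b := by
  constructor
  · intro h; exact h ⟨0, by simp⟩
  · intro h i
    rcases i with ⟨i, hi⟩
    simp only [List.length_singleton] at hi
    interval_cases i
    simpa using h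

lemma averaging {μ : Measure (ℕ → Bool)} (hμ : IsFairCoin μ) {B : Set (ℕ → Bool)}
    (hB : MeasurableSet B) :
    μ B = 2⁻¹ * μ (localize B [false]) + 2⁻¹ * μ (localize B [true]) := by
  have hsplit : B = (B ∩ _root_.cylinder [false]) ∪ (B ∩ _root_.cylinder [true]) := by
    ext X
    simp only [Set.mem_union, Set.mem_inter_iff, mem_cyl_single]
    rcases Bool.eq_false_or_eq_true (X 0) with h | h <;> tauto
  have hdisj : Disjoint (B ∩ _root_.cylinder [false]) (B ∩ _root_.cylinder [true]) := by
    refine Set.disjoint_left.mpr ?_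
    rintro X ⟨_, h1⟩ ⟨_, h2⟩
    rw [mem_cyl_single] at h1 h2
    simp [h1] at h2
  have hval : ∀ b : Bool, μ (B ∩ _root_.cylinder [b]) = 2⁻¹ * μ (localize B [b]) := by
    intro b
    have := cond_measure hμ hB [b]
    rw [List.length_singleton, pow_one] at this
    rw [this, ← mul_assoc, ENNReal.inv_mul_cancel (by norm_num) (by norm_num), one_mul]
  calc μ B = μ ((B ∩ _root_.cylinder [false]) ∪ (B ∩ _root_.cylinder [true])) := by rw [← hsplit]
  _ = μ (B ∩ _root_.cylinder [false]) + μ (B ∩ _root_.cylinder [true]) :=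
      measure_union hdisj (hB.inter (measurableSet_cylinder _))
  _ = 2⁻¹ * μ (localize B [false]) + 2⁻¹ * μ (localize B [true]) := by
      rw [hval false, hval true]

lemma ocat_append (σ ρ : List Bool) (X : ℕ → Bool) :
    ocat (σ ++ ρ) X = ocat σ (ocat ρ X) := by
  funext i
  by_cases h1 : i < σ.length
  · rw [ocat_lt σ _ h1, ocat_lt (σ ++ ρ) X (by simp; omega)]
    simp only [List.get_eq_getElem]
    rw [List.getElem_append_left h1]
  · rw [ocat_ge σ _ h1]
    by_cases h2 : i < (σ ++ ρ).length
    · have h2' : i - σ.length < ρ.length := by simp at h2; omega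
      rw [ocat_lt _ X h2, ocat_lt ρ X h2']
      simp only [List.get_eq_getElem]
      rw [List.getElem_append_right (by omega)]
    · have h2' : ¬ i - σ.length < ρ.length := by simp at h2 ⊢; omega
      rw [ocat_ge _ X h2, ocat_ge ρ X h2']
      congr 1
      simp
      omega

lemma localize_append (B : Set (ℕ → Bool)) (σ ρ : List Bool) :
    localize B (σ ++ ρ) = localize (localize B σ) ρ := by
  ext X
  simp only [localize, Set.mem_setOf_eq, ocat_append]

lemma exists_bit {μ : Measure (ℕ → Bool)} (hμ : IsFairCoin μ) {B : Set (ℕ → Bool)}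
    (hB : MeasurableSet B) (σ : List Bool) :
    ∃ b : Bool, μ (localize B (σ ++ [b])) ≤ μ (localize B σ) := by
  have hB' : MeasurableSet (localize B σ) := (measurable_ocat σ) hB
  have havg := averaging hμ hB'
  have key : ∀ b : Bool, localize B (σ ++ [b]) = localize (localize B σ) [b] :=
    fun b => localize_append B σ [b]
  rcases le_total (μ (localize (localize B σ) [false])) (μ (localize (localize B σ) [true])) with h | h
  · refine ⟨false, ?_⟩
    rw [key]
    calc μ (localize (localize B σ) [false])
        = 2⁻¹ * μ (localize (localize B σ) [false]) + 2⁻¹ * μ (localize (localize B σ) [false]) := by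
          rw [← add_mul, ENNReal.inv_two_add_inv_two, one_mul]
    _ ≤ 2⁻¹ * μ (localize (localize B σ) [false]) + 2⁻¹ * μ (localize (localize B σ) [true]) :=
          add_le_add_right (mul_le_mul_right h _) _
    _ = μ (localize B σ) := havg.symm
  · refine ⟨true, ?_⟩
    rw [key]
    calc μ (localize (localize B σ) [true])
        = 2⁻¹ * μ (localize (localize B σ) [true]) + 2⁻¹ * μ (localize (localize B σ) [true]) := by
          rw [← add_mul, ENNReal.inv_two_add_inv_two, one_mul]
    _ ≤ 2⁻¹ * μ (localize (localize B σ) [false]) + 2⁻¹ * μ (localize (localize B σ) [true]) :=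
          add_le_add_left (mul_le_mul_right h _) _
    _ = μ (localize B σ) := havg.symm

lemma localize_nil (B : Set (ℕ → Bool)) : localize B [] = B := by
  have : ∀ X : ℕ → Bool, ocat [] X = X := by
    intro X; funext i; simp [ocat]
  ext X; simp [localize, this]

end S3

namespace S3

lemma localize_union (A B : Set (ℕ → Bool)) (σ : List Bool) :
    localize (A ∪ B) σ = localize A σ ∪ localize B σ := rfl

lemma sum_halves (n : ℕ) :
    (1 : ENNReal) - 2⁻¹ ^ (n + 1) + 2⁻¹ ^ (n + 2) = 1 - 2⁻¹ ^ (n + 2) := by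
  have ha : (2⁻¹ : ENNReal) ^ (n + 1) = 2⁻¹ ^ (n + 2) + 2⁻¹ ^ (n + 2) := by
    rw [← two_mul, pow_succ (2⁻¹ : ENNReal) (n + 1), ← mul_assoc]
    rw [mul_comm (2 : ENNReal), mul_assoc, ENNReal.mul_inv_cancel (by norm_num) (by norm_num),
      mul_one]
  have hle1 : (2⁻¹ : ENNReal) ^ (n + 1) ≤ 1 :=
    pow_le_one' (ENNReal.inv_le_one.mpr one_le_two) _
  have hle : (2⁻¹ : ENNReal) ^ (n + 2) ≤ 1 - 2⁻¹ ^ (n + 2) := by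
    apply ENNReal.le_sub_of_add_le_right (by simp [ENNReal.pow_ne_top])
    rw [← ha]; exact hle1
  rw [ha, ← tsub_tsub, tsub_add_cancel_of_le hle]

end S3

/-- Given open sets `G_n` with `λ(G_n) ≤ 2^{-2n-1}`, letting
`L_n = ⋃_{m ≤ n} G_m`, there is a `Z` with `λ(L_n ∣ Z↾n) ≤ 1 − 2^{-n-1}` for
all `n`; moreover any such `Z` avoids every `G_n`. -/
theorem stmt3 (μ : Measure (ℕ → Bool)) (hμ : IsFairCoin μ)
    (G : ℕ → Set (ℕ → Bool)) (hopen : ∀ n, IsOpen (G n))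
    (hsmall : ∀ n, μ (G n) ≤ (2 : ENNReal)⁻¹ ^ (2 * n + 1))
    (L : ℕ → Set (ℕ → Bool)) (hL : ∀ n, L n = ⋃ m, ⋃ (_ : m ≤ n), G m) :
    (∃ Z : ℕ → Bool, ∀ n,
        μ (localize (L n) (initSeg Z n)) ≤ 1 - (2 : ENNReal)⁻¹ ^ (n + 1)) ∧
    (∀ Z : ℕ → Bool,
      (∀ n, μ (localize (L n) (initSeg Z n)) ≤ 1 - (2 : ENNReal)⁻¹ ^ (n + 1)) →
      ∀ n, Z ∉ G n) := by
  haveI := hμ.1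
  have hLmeas : ∀ n, MeasurableSet (L n) := by
    intro n
    rw [hL]
    exact MeasurableSet.iUnion fun m => MeasurableSet.iUnion fun _ => (hopen m).measurableSet
  have hL0 : L 0 = G 0 := by
    rw [hL]; ext x; simp [Nat.le_zero]
  have hLsucc : ∀ n, L (n + 1) = L n ∪ G (n + 1) := by
    intro n
    rw [hL, hL]
    ext x
    simp only [Set.mem_iUnion, Set.mem_union]
    constructor
    · rintro ⟨m, hm, hx⟩
      rcases Nat.lt_or_ge m (n + 1) with h | h
      · exact Or.inl ⟨m, by omega, hx⟩
      · have hmeq : m = n + 1 := le_antisymm hm h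
        subst hmeq
        exact Or.inr hx
    · rintro (⟨m, hm, hx⟩ | hx)
      · exact ⟨m, by omega, hx⟩
      · exact ⟨n + 1, le_refl _, hx⟩
  constructor
  · -- existence
    have hstep : ∀ n (σ : List Bool), ∃ b : Bool,
        μ (localize (L n) (σ ++ [b])) ≤ μ (localize (L n) σ) :=
      fun n σ => S3.exists_bit hμ (hLmeas n) σ
    choose pick hpick using hstep
    let τ : ℕ → List Bool := fun n => Nat.rec [] (fun n ih => ih ++ [pick n ih]) n
    have hτ0 : τ 0 = [] := rfl
    have hτs : ∀ n, τ (n + 1) = τ n ++ [pick n (τ n)] := fun n => rfl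
    have hlen : ∀ n, (τ n).length = n := by
      intro n
      induction n with
      | zero => rfl
      | succ n ih => rw [hτs, List.length_append, ih]; rfl
    have hmono : ∀ n m, n ≤ m → τ n <+: τ m := by
      intro n m hnm
      induction m, hnm using Nat.le_induction with
      | base => exact List.prefix_refl _
      | succ m hm ih => exact ih.trans ⟨[pick m (τ m)], (hτs m).symm⟩
    set Z : ℕ → Bool := fun i => (τ (i + 1)).getD i false with hZ
    have hinit : ∀ n, initSeg Z n = τ n := by
      intro n
      apply List.ext_getElem
      · simp [initSeg, hlen]
      · intro i h1 h2
        have hi : i < n := by simpa [initSeg] using h1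
        simp only [initSeg, List.getElem_ofFn]
        rw [hZ]
        obtain ⟨t, ht⟩ := hmono (i + 1) n hi
        have hit : i < (τ (i + 1)).length := lt_of_lt_of_eq (Nat.lt_succ_self i) (hlen (i + 1)).symm
        show (τ (i + 1)).getD i false = (τ n)[i]
        rw [List.getD_eq_getElem _ _ hit]
        exact List.IsPrefix.getElem ⟨t, ht⟩ hit
    refine ⟨Z, ?_⟩
    intro n
    rw [hinit]
    induction n with
    | zero =>
      rw [hτ0, S3.localize_nil, hL0, pow_one]
      calc μ (G 0) ≤ (2 : ENNReal)⁻¹ ^ (2 * 0 + 1) := hsmall 0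
      _ = 2⁻¹ := by norm_num
      _ = 1 - 2⁻¹ := ENNReal.one_sub_inv_two.symm
    | succ n ih =>
      have hτlen : (τ (n + 1)).length = n + 1 := hlen (n + 1)
      calc μ (localize (L (n + 1)) (τ (n + 1)))
          ≤ μ (localize (L n) (τ (n + 1))) + μ (localize (G (n + 1)) (τ (n + 1))) := by
            rw [hLsucc, S3.localize_union]
            exact measure_union_le _ _
      _ ≤ μ (localize (L n) (τ n)) + 2 ^ (n + 1) * μ (G (n + 1)) := by
            apply add_le_add
            · rw [hτs]; exact hpick n (τ n)
            · have := S3.localize_le hμ (hopen (n + 1)).measurableSet (τ (n + 1))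
              rwa [hτlen] at this
      _ ≤ (1 - 2⁻¹ ^ (n + 1)) + 2 ^ (n + 1) * (2 : ENNReal)⁻¹ ^ (2 * (n + 1) + 1) :=
            add_le_add ih (mul_le_mul_right (hsmall (n + 1)) _)
      _ = (1 - 2⁻¹ ^ (n + 1)) + 2⁻¹ ^ (n + 2) := by
            congr 1
            rw [show 2 * (n + 1) + 1 = (n + 1) + (n + 2) by omega,
              pow_add (2 : ENNReal)⁻¹ (n + 1) (n + 2), ← mul_assoc, S3.two_mul_inv_pow, one_mul]
      _ = 1 - 2⁻¹ ^ (n + 1 + 1) := S3.sum_halves n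
  · -- avoidance
    intro Z hZ n hZG
    obtain ⟨I, u, hu, hsub⟩ := isOpen_pi_iff.mp (hopen n) Z hZG
    set k := max n ((I.sup id) + 1) with hk
    have hcylsub : _root_.cylinder (initSeg Z k) ⊆ G n := by
      intro Y hY
      apply hsub
      intro i hi
      have hik : i < k := by
        have : i ≤ I.sup id := Finset.le_sup (f := id) hi
        omega
      have hYi : Y i = Z i := by
        have h1 := hY ⟨i, by simpa [initSeg] using hik⟩
        rw [h1, S3.initSeg_get]
      rw [hYi]
      exact (hu i hi).2
    have hGL : G n ⊆ L k := by
      rw [hL]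
      intro x hx
      exact Set.mem_iUnion.mpr ⟨n, Set.mem_iUnion.mpr ⟨le_max_left _ _, hx⟩⟩
    have huniv : localize (L k) (initSeg Z k) = Set.univ := by
      apply Set.eq_univ_of_forall
      intro X
      have : ocat (initSeg Z k) X ∈ _root_.cylinder (initSeg Z k) := by
        intro i
        exact S3.ocat_lt _ X i.2
      exact hGL (hcylsub this)
    have h1 : μ (localize (L k) (initSeg Z k)) = 1 := by
      rw [huniv]; exact measure_univ
    have h2 := hZ k
    rw [h1] at h2
    have h3 : (1 : ENNReal) - 2⁻¹ ^ (k + 1) < 1 :=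
      ENNReal.sub_lt_self ENNReal.one_ne_top one_ne_zero
        (pow_ne_zero _ (ENNReal.inv_ne_zero.mpr ENNReal.ofNat_ne_top))
    exact absurd (lt_of_le_of_lt h2 h3) (lt_irrefl _)
end

section
/- For every computable approximation g₀ : ℕ × ℕ → ℕ to a Δ⁰₂ function f, there exist a computable well-ordering R of order type ω and a computable function g₁ : ℕ × ℕ → ℕ such that ⟨g₀, g₁⟩ is an R-approximation to f. -/
/-- `R` is a computable well-ordering of ℕ (given by its computable characteristic
function): a computable, irreflexive, transitive, total, well-founded strict order. -/
def CompWellOrder (R : ℕ → ℕ → Bool) : Prop :=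
  Computable₂ R ∧
  (∀ a, R a a = false) ∧
  (∀ a b c, R a b = true → R b c = true → R a c = true) ∧
  (∀ a b, a ≠ b → R a b = true ∨ R b a = true) ∧
  WellFounded fun a b => R a b = true

/-- `⟨g₀, g₁⟩` is an `R`-approximation: both components are computable, and
whenever the pair changes value, the second component decreases in `R`. -/
def RApprox (R : ℕ → ℕ → Bool) (g₀ g₁ : ℕ → ℕ → ℕ) : Prop :=
  Computable₂ g₀ ∧ Computable₂ g₁ ∧
  ∀ x s, (g₀ x (s + 1), g₁ x (s + 1)) ≠ (g₀ x s, g₁ x s) →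
    R (g₁ x (s + 1)) (g₁ x s) = true

/-- `f` is `R`-c.e.: it is the pointwise limit of the first component of
some `R`-approximation. -/
def RCE (R : ℕ → ℕ → Bool) (f : ℕ → ℕ) : Prop :=
  ∃ g₀ g₁ : ℕ → ℕ → ℕ, RApprox R g₀ g₁ ∧ ∀ x, ∃ s₀, ∀ s ≥ s₀, g₀ x s = f x

/-- `f` is ω-c.e.: it has a computable approximation whose number of mind
changes is bounded by a computable function. -/
def OmegaCEFun (f : ℕ → ℕ) : Prop :=
  ∃ g : ℕ → ℕ → ℕ, ∃ b : ℕ → ℕ, Computable₂ g ∧ Computable b ∧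
    (∀ x, ∃ s₀, ∀ s ≥ s₀, g x s = f x) ∧
    (∀ x, ∀ F : Finset ℕ, (∀ s ∈ F, g x (s + 1) ≠ g x s) → F.card ≤ b x)

namespace Stmt8Aux

variable (g₀ : ℕ → ℕ → ℕ)

/-- change indicator at stage `s` for column `x` -/
def chg (x s : ℕ) : Bool := !(decide (g₀ x s = g₀ x (s - 1)))

/-- the field `V`: pairs `⟨x,0⟩` and change pairs -/
def isV (a : ℕ) : Bool := decide (a.unpair.2 = 0) || chg g₀ a.unpair.1 a.unpair.2

/-- the "class" of an element: `V`-elements live in their column, others are spread out -/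
def cls (a : ℕ) : ℕ := bif isV g₀ a then a.unpair.1 else a.unpair.1 + a.unpair.2

/-- tie-break inside one class -/
def tie (a b : ℕ) : Bool :=
  bif isV g₀ a then isV g₀ b && decide (b.unpair.2 < a.unpair.2)
  else bif isV g₀ b then true else decide (a < b)

/-- the well-ordering -/
def Rfun (a b : ℕ) : Bool :=
  decide (cls g₀ a < cls g₀ b) || (decide (cls g₀ a = cls g₀ b) && tie g₀ a b)

/-- last change stage `≤ s` (or `0`) -/
def lastChange (x : ℕ) : ℕ → ℕ
  | 0 => 0
  | s + 1 => bif chg g₀ x (s + 1) then s + 1 else lastChange x s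

/-- the second component of the approximation -/
def g1 (x s : ℕ) : ℕ := Nat.pair x (lastChange g₀ x s)

lemma lastChange_le (x s : ℕ) : lastChange g₀ x s ≤ s := by
  induction s with
  | zero => simp [lastChange]
  | succ s ih =>
    rw [lastChange]
    cases chg g₀ x (s + 1) <;> simp <;> omega

lemma isV_g1 (x s : ℕ) : isV g₀ (g1 g₀ x s) = true := by
  induction s with
  | zero => simp [g1, lastChange, isV]
  | succ s ih =>
    rw [g1, lastChange]
    cases h : chg g₀ x (s + 1) with
    | false => simpa [g1] using ih
    | true => simp [isV, h]

lemma Rfun_irrefl (a : ℕ) : Rfun g₀ a a = false := by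
  cases h : isV g₀ a <;> simp [Rfun, tie, h]

lemma Rfun_trans (a b c : ℕ) (hab : Rfun g₀ a b = true) (hbc : Rfun g₀ b c = true) :
    Rfun g₀ a c = true := by
  simp only [Rfun, Bool.or_eq_true, Bool.and_eq_true, decide_eq_true_eq] at *
  rcases hab with h1 | ⟨h1, t1⟩
  · rcases hbc with h2 | ⟨h2, _⟩
    · exact Or.inl (h1.trans h2)
    · exact Or.inl (h2 ▸ h1)
  · rcases hbc with h2 | ⟨h2, t2⟩
    · exact Or.inl (h1 ▸ h2)
    · refine Or.inr ⟨h1.trans h2, ?_⟩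
      -- transitivity of the tie-break
      cases hA : isV g₀ a with
      | true =>
        simp only [tie, hA, cond_true, Bool.and_eq_true, decide_eq_true_eq] at t1 ⊢
        obtain ⟨hB, l1⟩ := t1
        simp only [tie, hB, cond_true, Bool.and_eq_true, decide_eq_true_eq] at t2
        exact ⟨t2.1, t2.2.trans l1⟩
      | false =>
        simp only [tie, hA, cond_false] at t1 ⊢
        cases hC : isV g₀ c with
        | true => simp [hC]
        | false =>
          simp only [hC, cond_false, decide_eq_true_eq]
          cases hB : isV g₀ b with
          | true => simp [tie, hB, hC] at t2
          | false =>
            simp only [hB, cond_false, decide_eq_true_eq] at t1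
            simp only [tie, hB, hC, cond_false, decide_eq_true_eq] at t2
            exact t1.trans t2

lemma Rfun_total (a b : ℕ) (hab : a ≠ b) :
    Rfun g₀ a b = true ∨ Rfun g₀ b a = true := by
  rcases Nat.lt_trichotomy (cls g₀ a) (cls g₀ b) with h | h | h
  · exact Or.inl (by simp [Rfun, h])
  · -- same class, use tie-break
    have key : tie g₀ a b = true ∨ tie g₀ b a = true := by
      cases hA : isV g₀ a with
      | true =>
        cases hB : isV g₀ b with
        | true =>
          have hxa : cls g₀ a = a.unpair.1 := by simp [cls, hA]
          have hxb : cls g₀ b = b.unpair.1 := by simp [cls, hB]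
          have hx : a.unpair.1 = b.unpair.1 := by rw [← hxa, ← hxb, h]
          have hs : a.unpair.2 ≠ b.unpair.2 := by
            intro hs
            apply hab
            rw [← Nat.pair_unpair a, hx, hs, Nat.pair_unpair]
          rcases Nat.lt_or_ge a.unpair.2 b.unpair.2 with hlt | hge
          · exact Or.inr (by simp [tie, hA, hB, hlt])
          · have : b.unpair.2 < a.unpair.2 := lt_of_le_of_ne hge (Ne.symm hs)
            exact Or.inl (by simp [tie, hA, hB, this])
        | false => exact Or.inr (by simp [tie, hA, hB])
      | false =>
        cases hB : isV g₀ b with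
        | true => exact Or.inl (by simp [tie, hA, hB])
        | false =>
          rcases Nat.lt_or_ge a b with hlt | hge
          · exact Or.inl (by simp [tie, hA, hB, hlt])
          · have : b < a := lt_of_le_of_ne hge (Ne.symm hab)
            exact Or.inr (by simp [tie, hA, hB, this])
    rcases key with t | t
    · exact Or.inl (by simp [Rfun, h, t])
    · exact Or.inr (by simp [Rfun, h.symm, t])
  · exact Or.inr (by simp [Rfun, h])

lemma Rfun_change (x s : ℕ) (h : chg g₀ x (s + 1) = true) :
    Rfun g₀ (g1 g₀ x (s + 1)) (g1 g₀ x s) = true := by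
  have hnew : g1 g₀ x (s + 1) = Nat.pair x (s + 1) := by
    simp [g1, lastChange, h]
  have hVnew : isV g₀ (g1 g₀ x (s + 1)) = true := isV_g1 g₀ x (s + 1)
  have hVold : isV g₀ (g1 g₀ x s) = true := isV_g1 g₀ x s
  have hVnew' : isV g₀ (Nat.pair x (s + 1)) = true := hnew ▸ hVnew
  have hVold' : isV g₀ (Nat.pair x (lastChange g₀ x s)) = true := hVold
  have hclsnew : cls g₀ (g1 g₀ x (s + 1)) = x := by
    rw [hnew]; simp [cls, hVnew']
  have hclsold : cls g₀ (g1 g₀ x s) = x := by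
    show cls g₀ (Nat.pair x (lastChange g₀ x s)) = x
    simp [cls, hVold']
  have hlt : (g1 g₀ x s).unpair.2 < (g1 g₀ x (s + 1)).unpair.2 := by
    rw [hnew]
    simp only [g1, Nat.unpair_pair]
    exact lt_of_le_of_lt (lastChange_le g₀ x s) (Nat.lt_succ_self s)
  simp [Rfun, tie, hclsnew, hclsold, hVnew, hVold, hlt]

lemma chg_comp (hg₀ : Computable₂ g₀) : Computable₂ (chg g₀) := by
  have h1 : Computable fun p : ℕ × ℕ => g₀ p.1 p.2 := hg₀
  have h2 : Computable fun p : ℕ × ℕ => g₀ p.1 (p.2 - 1) :=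
    hg₀.comp Computable.fst (Primrec.pred.to_comp.comp Computable.snd)
  have heq : Computable fun p : ℕ × ℕ => decide (g₀ p.1 p.2 = g₀ p.1 (p.2 - 1)) :=
    ((Primrec.eq (α := ℕ)).decide.to_comp).comp h1 h2
  exact (Primrec.not.to_comp.comp heq).to₂

lemma isV_comp (hg₀ : Computable₂ g₀) : Computable (isV g₀) := by
  have hu1 : Computable fun a : ℕ => a.unpair.1 :=
    (Primrec.fst.comp Primrec.unpair).to_comp
  have hu2 : Computable fun a : ℕ => a.unpair.2 :=
    (Primrec.snd.comp Primrec.unpair).to_comp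
  have hz : Computable fun a : ℕ => decide (a.unpair.2 = 0) :=
    ((Primrec.eq (α := ℕ)).decide.to_comp).comp hu2 (Computable.const 0)
  have hc : Computable fun a : ℕ => chg g₀ a.unpair.1 a.unpair.2 :=
    (chg_comp g₀ hg₀).comp hu1 hu2
  exact (Primrec.or.to_comp).comp hz hc

lemma cls_comp (hg₀ : Computable₂ g₀) : Computable (cls g₀) := by
  have hu1 : Computable fun a : ℕ => a.unpair.1 :=
    (Primrec.fst.comp Primrec.unpair).to_comp
  have hu2 : Computable fun a : ℕ => a.unpair.2 :=
    (Primrec.snd.comp Primrec.unpair).to_comp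
  have hadd : Computable fun a : ℕ => a.unpair.1 + a.unpair.2 :=
    (Primrec.nat_add.to_comp).comp hu1 hu2
  exact Computable.cond (isV_comp g₀ hg₀) hu1 hadd

lemma tie_comp (hg₀ : Computable₂ g₀) : Computable₂ (tie g₀) := by
  have hVa : Computable fun p : ℕ × ℕ => isV g₀ p.1 :=
    (isV_comp g₀ hg₀).comp Computable.fst
  have hVb : Computable fun p : ℕ × ℕ => isV g₀ p.2 :=
    (isV_comp g₀ hg₀).comp Computable.snd
  have hu2a : Computable fun p : ℕ × ℕ => p.1.unpair.2 :=
    ((Primrec.snd.comp Primrec.unpair).comp Primrec.fst).to_comp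
  have hu2b : Computable fun p : ℕ × ℕ => p.2.unpair.2 :=
    ((Primrec.snd.comp Primrec.unpair).comp Primrec.snd).to_comp
  have hlt : Computable fun p : ℕ × ℕ => decide (p.2.unpair.2 < p.1.unpair.2) :=
    (Primrec.nat_lt.decide.to_comp).comp hu2b hu2a
  have hbr1 : Computable fun p : ℕ × ℕ => isV g₀ p.2 && decide (p.2.unpair.2 < p.1.unpair.2) :=
    (Primrec.and.to_comp).comp hVb hlt
  have hltab : Computable fun p : ℕ × ℕ => decide (p.1 < p.2) :=
    (Primrec.nat_lt.decide.to_comp).comp Computable.fst Computable.snd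
  have hbr2 : Computable fun p : ℕ × ℕ =>
      (bif isV g₀ p.2 then true else decide (p.1 < p.2)) :=
    Computable.cond hVb (Computable.const true) hltab
  exact (Computable.cond hVa hbr1 hbr2).to₂

lemma Rfun_comp (hg₀ : Computable₂ g₀) : Computable₂ (Rfun g₀) := by
  have hca : Computable fun p : ℕ × ℕ => cls g₀ p.1 :=
    (cls_comp g₀ hg₀).comp Computable.fst
  have hcb : Computable fun p : ℕ × ℕ => cls g₀ p.2 :=
    (cls_comp g₀ hg₀).comp Computable.snd
  have hlt : Computable fun p : ℕ × ℕ => decide (cls g₀ p.1 < cls g₀ p.2) :=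
    (Primrec.nat_lt.decide.to_comp).comp hca hcb
  have heq : Computable fun p : ℕ × ℕ => decide (cls g₀ p.1 = cls g₀ p.2) :=
    ((Primrec.eq (α := ℕ)).decide.to_comp).comp hca hcb
  have htie : Computable fun p : ℕ × ℕ => tie g₀ p.1 p.2 := tie_comp g₀ hg₀
  have hand : Computable fun p : ℕ × ℕ =>
      (decide (cls g₀ p.1 = cls g₀ p.2) && tie g₀ p.1 p.2) :=
    (Primrec.and.to_comp).comp heq htie
  exact ((Primrec.or.to_comp).comp hlt hand).to₂

lemma g1_comp (hg₀ : Computable₂ g₀) : Computable₂ (g1 g₀) := by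
  have hh : Computable₂ fun (a : ℕ × ℕ) (q : ℕ × ℕ) =>
      (bif chg g₀ a.1 (q.1 + 1) then q.1 + 1 else q.2) := by
    have hc : Computable fun r : (ℕ × ℕ) × ℕ × ℕ => chg g₀ r.1.1 (r.2.1 + 1) :=
      (chg_comp g₀ hg₀).comp (Computable.fst.comp Computable.fst)
        (Computable.succ.comp (Computable.fst.comp Computable.snd))
    have hf : Computable fun r : (ℕ × ℕ) × ℕ × ℕ => r.2.1 + 1 :=
      Computable.succ.comp (Computable.fst.comp Computable.snd)
    have hg : Computable fun r : (ℕ × ℕ) × ℕ × ℕ => r.2.2 :=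
      Computable.snd.comp Computable.snd
    exact (Computable.cond hc hf hg).to₂
  have hrec : Computable fun a : ℕ × ℕ =>
      Nat.rec (motive := fun _ => ℕ) 0
        (fun y IH => bif chg g₀ a.1 (y + 1) then y + 1 else IH) a.2 := by
    have := Computable.nat_rec (f := fun a : ℕ × ℕ => a.2)
      (g := fun _ : ℕ × ℕ => (0 : ℕ))
      (h := fun (a : ℕ × ℕ) (q : ℕ × ℕ) => (bif chg g₀ a.1 (q.1 + 1) then q.1 + 1 else q.2))
      Computable.snd (Computable.const 0) hh
    exact this
  have heq : ∀ a : ℕ × ℕ,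
      (Nat.rec (motive := fun _ => ℕ) 0
        (fun y IH => bif chg g₀ a.1 (y + 1) then y + 1 else IH) a.2) =
      lastChange g₀ a.1 a.2 := by
    intro a
    induction a.2 with
    | zero => rfl
    | succ s ih => rw [lastChange, ← ih]
  have hlast : Computable fun a : ℕ × ℕ => lastChange g₀ a.1 a.2 :=
    hrec.of_eq heq
  exact ((Primrec₂.to_comp Primrec₂.natPair).comp Computable.fst hlast).to₂

end Stmt8Aux

/-- Ershov-style fact: every computable approximation `g₀` to a `Δ⁰₂` function
`f` extends to an `R`-approximation `⟨g₀, g₁⟩` for some computable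
well-ordering `R` of order type ω (all initial segments finite). -/
theorem stmt8 (f : ℕ → ℕ) (g₀ : ℕ → ℕ → ℕ) (hg₀ : Computable₂ g₀)
    (happrox : ∀ x, ∃ s₀, ∀ s ≥ s₀, g₀ x s = f x) :
    ∃ R : ℕ → ℕ → Bool, CompWellOrder R ∧
      (∀ a, {b | R b a = true}.Finite) ∧
      ∃ g₁ : ℕ → ℕ → ℕ, RApprox R g₀ g₁ := by
  classical
  choose s₀ hs₀ using happrox
  set R := Stmt8Aux.Rfun g₀ with hR
  -- finiteness of initial segments
  have unpair_inj : Function.Injective Nat.unpair := fun a b h => by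
    rw [← Nat.pair_unpair a, h, Nat.pair_unpair]
  have hclsfin : ∀ C : ℕ, {b | Stmt8Aux.cls g₀ b ≤ C}.Finite := by
    intro C
    set M := C + (Finset.range (C + 1)).sup s₀ with hM
    have hsub : {b | Stmt8Aux.cls g₀ b ≤ C} ⊆
        Nat.unpair ⁻¹' (Set.Iic C ×ˢ Set.Iic M) := by
      intro b hb
      simp only [Set.mem_setOf_eq] at hb
      simp only [Set.mem_preimage, Set.mem_prod, Set.mem_Iic]
      cases hV : Stmt8Aux.isV g₀ b with
      | false =>
        rw [Stmt8Aux.cls, hV, cond_false] at hb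
        constructor <;> omega
      | true =>
        rw [Stmt8Aux.cls, hV, cond_true] at hb
        refine ⟨hb, ?_⟩
        have hs : b.unpair.2 ≤ s₀ b.unpair.1 := by
          rw [Stmt8Aux.isV, Bool.or_eq_true, decide_eq_true_eq] at hV
          rcases hV with h0 | hc
          · omega
          · by_contra hgt
            push_neg at hgt
            rw [Stmt8Aux.chg, Bool.not_eq_true', decide_eq_false_iff_not] at hc
            exact hc (by
              rw [hs₀ b.unpair.1 b.unpair.2 (le_of_lt hgt),
                hs₀ b.unpair.1 (b.unpair.2 - 1) (by omega)])
        have : s₀ b.unpair.1 ≤ (Finset.range (C + 1)).sup s₀ :=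
          Finset.le_sup (Finset.mem_range.mpr (by omega))
        omega
    exact Set.Finite.subset (((Set.finite_Iic C).prod (Set.finite_Iic M)).preimage
      (unpair_inj.injOn)) hsub
  have hfin : ∀ a, {b | R b a = true}.Finite := by
    intro a
    refine Set.Finite.subset (hclsfin (Stmt8Aux.cls g₀ a)) ?_
    intro b hb
    simp only [Set.mem_setOf_eq] at hb ⊢
    rw [hR, Stmt8Aux.Rfun, Bool.or_eq_true, Bool.and_eq_true,
      decide_eq_true_eq, decide_eq_true_eq] at hb
    rcases hb with h | ⟨h, _⟩
    · exact le_of_lt h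
    · exact le_of_eq h
  -- well-foundedness from finite initial segments
  have hwf : WellFounded fun a b => R a b = true := by
    have hrank : ∀ a b, R a b = true → (hfin b).toFinset.card < (hfin a).toFinset.card →
        True := fun _ _ _ _ => trivial
    have key : ∀ a b : ℕ, R a b = true →
        (hfin a).toFinset.card < (hfin b).toFinset.card := by
      intro a b hab
      apply Finset.card_lt_card
      constructor
      · intro c hc
        simp only [Set.Finite.mem_toFinset, Set.mem_setOf_eq] at hc ⊢
        exact Stmt8Aux.Rfun_trans g₀ c a b hc hab
      · intro hsub
        have hmem : a ∈ (hfin b).toFinset := by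
          simp only [Set.Finite.mem_toFinset, Set.mem_setOf_eq]; exact hab
        have := hsub hmem
        simp only [Set.Finite.mem_toFinset, Set.mem_setOf_eq] at this
        rw [hR] at this
        rw [Stmt8Aux.Rfun_irrefl g₀ a] at this
        exact Bool.false_ne_true this
    exact Subrelation.wf (fun {a b} h => key a b h)
      (InvImage.wf (fun a => (hfin a).toFinset.card) Nat.lt_wfRel.wf)
  refine ⟨R, ⟨Stmt8Aux.Rfun_comp g₀ hg₀, Stmt8Aux.Rfun_irrefl g₀,
    Stmt8Aux.Rfun_trans g₀, Stmt8Aux.Rfun_total g₀, hwf⟩, hfin,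
    Stmt8Aux.g1 g₀, hg₀, Stmt8Aux.g1_comp g₀ hg₀, ?_⟩
  intro x s hne
  cases hc : Stmt8Aux.chg g₀ x (s + 1) with
  | true => exact Stmt8Aux.Rfun_change g₀ x s hc
  | false =>
    exfalso
    apply hne
    have h0 : g₀ x (s + 1) = g₀ x s := by
      have := hc
      rw [Stmt8Aux.chg] at this
      simpa using this
    have h1 : Stmt8Aux.g1 g₀ x (s + 1) = Stmt8Aux.g1 g₀ x s := by
      rw [Stmt8Aux.g1, Stmt8Aux.g1, Stmt8Aux.lastChange, hc, cond_false]
    rw [h0, h1]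
end
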